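/- Core persistence (part of Theorem 1(i)): if ε ≥ 0 and x_j^t ≥ 0 for every vertex j, then every core vertex at time t is still a core vertex at time t+1; that is, x_i^t > ε implies x_i^{t+1} > ε. In particular the set of core vertices is nondecreasing in t. -/
import Mathlib


/-- **Core persistence (Theorem 1(i), part).** If `ε ≥ 0` and all charges at time `t` are
nonnegative, then every core vertex at time `t` is still a core vertex at time `t+1`:
`x_i^t > ε → x_i^{t+1} > ε`. Hence the set of core vertices is nondecreasing in `t`. -/
theorem core_persistence
    {V : Type*} [Fintype V] [DecidableEq V]
    (G : SimpleGraph V) [DecidableRel G.Adj]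
    (hdeg : ∀ i : V, 0 < G.degree i)
    (ε : ℝ) (x : ℕ → V → ℝ)
    (hupd : ∀ (t : ℕ) (i : V),
      x (t + 1) i =
        (ε + (x t i - ε) / 2) * (if ε < x t i then (1 : ℝ) else 0)
          + x t i * (1 - (if ε < x t i then (1 : ℝ) else 0))
          + (1 / 2) * ∑ j ∈ G.neighborFinset i,
              (if ε < x t j then (1 : ℝ) else 0) * (x t j - ε) / (G.degree j))
    (hε : 0 ≤ ε) (t : ℕ) (hnn : ∀ j : V, 0 ≤ x t j)
    (i : V) (hi : ε < x t i) :
    ε < x (t + 1) i := by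
  have hsum : 0 ≤ ∑ j ∈ G.neighborFinset i,
      (if ε < x t j then (1 : ℝ) else 0) * (x t j - ε) / (G.degree j) := by
    apply Finset.sum_nonneg
    intro j _
    by_cases h : ε < x t j
    · have hd : (0:ℝ) ≤ (G.degree j : ℝ) := Nat.cast_nonneg _
      simp only [h, if_pos, one_mul]
      exact div_nonneg (by linarith) hd
    · simp [h]
  rw [hupd t i]
  simp only [hi, if_pos]
  nlinarith
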